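/- arXiv:1312.0106 — 7 statements merged into one kernel-verified Lean document; each statement's English description precedes it below -/
import Mathlib

section
/- Let H and K be groups and ρ : H → K a surjective group homomorphism whose kernel is contained in the center Z(H). Let X be a subgroup of H and set P := ρ⁻¹(C_K(ρ(X))). Then the centralizer C_H(X) is a normal subgroup of P, and for every natural number k such that x^k = 1 for all x ∈ X, one has h^k ∈ C_H(X) for every h ∈ P; in other words, the exponent of P/C_H(X) divides the exponent of X. (First assertion of Lemma 1.2.1.) -/
section aux

variable {H K : Type*} [Group H] [Group K]

/-- key commutation fact -/
lemma aux_key (ρ : H →* K) (hker : ρ.ker ≤ Subgroup.center H)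
    (X : Subgroup H) (h : H)
    (hh : h ∈ (Subgroup.centralizer ((X.map ρ) : Set K)).comap ρ)
    (x : H) (hx : x ∈ X) :
    ∃ z, (∀ g : H, z * g = g * z) ∧ h * x = z * x * h := by
  have hmem : h * x * h⁻¹ * x⁻¹ ∈ ρ.ker := by
    have hc : ρ x * ρ h = ρ h * ρ x := by
      have := (Subgroup.mem_centralizer_iff.mp (Subgroup.mem_comap.mp hh)) (ρ x)
        (Subgroup.mem_map.mpr ⟨x, hx, rfl⟩)
      exact this
    simp only [MonoidHom.mem_ker, map_mul, map_inv]
    rw [← hc]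
    group
  refine ⟨h * x * h⁻¹ * x⁻¹, fun g => (Subgroup.mem_center_iff.mp (hker hmem) g).symm, ?_⟩
  group

end aux

/-- Lemma 1.2.1 (first assertion, exponent of `X` part): if `ρ : H → K` is a surjective
group homomorphism with central kernel and `X ≤ H`, and
`P = ρ⁻¹(C_K(ρ(X)))`, then `C_H(X)` is a normal subgroup of `P`, and for every `k`
annihilating `X`, `h ^ k ∈ C_H(X)` for every `h ∈ P`. -/
theorem stmt0 {H K : Type*} [Group H] [Group K] (ρ : H →* K)
    (hsurj : Function.Surjective ρ) (hker : ρ.ker ≤ Subgroup.center H)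
    (X : Subgroup H) :
    Subgroup.centralizer (X : Set H) ≤
        (Subgroup.centralizer ((X.map ρ) : Set K)).comap ρ ∧
      ((Subgroup.centralizer (X : Set H)).subgroupOf
        ((Subgroup.centralizer ((X.map ρ) : Set K)).comap ρ)).Normal ∧
      ∀ k : ℕ, (∀ x ∈ X, x ^ k = 1) →
        ∀ h ∈ (Subgroup.centralizer ((X.map ρ) : Set K)).comap ρ,
          h ^ k ∈ Subgroup.centralizer (X : Set H) := by
  refine ⟨?_, ?_, ?_⟩
  · -- C_H(X) ≤ P
    intro h hh
    rw [Subgroup.mem_comap, Subgroup.mem_centralizer_iff]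
    rintro g ⟨x, hx, rfl⟩
    have := Subgroup.mem_centralizer_iff.mp hh x hx
    rw [← map_mul, this, map_mul]
  · -- normality
    constructor
    rintro ⟨c, hcP⟩ hc ⟨p, hpP⟩
    simp only [Subgroup.mem_subgroupOf] at hc ⊢
    rw [Subgroup.mem_centralizer_iff] at hc ⊢
    intro x hx
    obtain ⟨z, hz, hpx⟩ := aux_key ρ hker X p hpP x hx
    have hzc : ∀ g : H, Commute z g := fun g => hz g
    have h1 : p⁻¹ * x * p = z⁻¹ * x := by
      apply mul_left_cancel (a := p)
      calc p * (p⁻¹ * x * p) = z⁻¹ * (z * x * p) := by group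
        _ = z⁻¹ * (p * x) := by rw [hpx]
        _ = (z⁻¹ * p) * x := by group
        _ = (p * z⁻¹) * x := by rw [((hzc p).inv_left).eq]
        _ = p * (z⁻¹ * x) := by group
    have hx2 : x = p * (z⁻¹ * x) * p⁻¹ := by rw [← h1]; group
    show x * (p * c * p⁻¹) = (p * c * p⁻¹) * x
    calc x * (p * c * p⁻¹)
        = p * (z⁻¹ * x) * p⁻¹ * (p * c * p⁻¹) := by rw [← hx2]
      _ = p * (z⁻¹ * (x * c)) * p⁻¹ := by group
      _ = p * (z⁻¹ * (c * x)) * p⁻¹ := by rw [hc x hx]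
      _ = p * ((z⁻¹ * c) * x) * p⁻¹ := by group
      _ = p * ((c * z⁻¹) * x) * p⁻¹ := by rw [((hzc c).inv_left).eq]
      _ = (p * c * p⁻¹) * (p * (z⁻¹ * x) * p⁻¹) := by group
      _ = (p * c * p⁻¹) * x := by rw [← hx2]
  · -- power part
    intro k hk h hhP
    rw [Subgroup.mem_centralizer_iff]
    intro x hx
    obtain ⟨z, hz, hpx⟩ := aux_key ρ hker X h hhP x hx
    -- h^n * x = z^n * x * h^n
    have hzc : ∀ g : H, Commute z g := fun g => hz g
    have hpow : ∀ n : ℕ, h ^ n * x = z ^ n * x * h ^ n := by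
      intro n
      induction n with
      | zero => simp
      | succ n ih =>
        calc h ^ (n + 1) * x = h * (h ^ n * x) := by rw [pow_succ']; group
          _ = h * (z ^ n * x * h ^ n) := by rw [ih]
          _ = (h * z ^ n) * (x * h ^ n) := by group
          _ = (z ^ n * h) * (x * h ^ n) := by rw [((hzc h).pow_left n).eq]
          _ = z ^ n * (h * x) * h ^ n := by group
          _ = z ^ n * (z * x * h) * h ^ n := by rw [hpx]
          _ = z ^ (n + 1) * x * h ^ (n + 1) := by rw [pow_succ, pow_succ']; group
    -- z ^ k = 1
    have hzx : z * x = h * x * h⁻¹ := by rw [hpx]; group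
    have hzk : z ^ k = 1 := by
      have h1 : (z * x) ^ k = z ^ k * x ^ k := (hzc x).mul_pow k
      have h2 : (z * x) ^ k = h * x ^ k * h⁻¹ := by rw [hzx, conj_pow]
      rw [hk x hx, mul_one] at h1 h2
      rw [h1] at h2; rw [h2]; group
    rw [eq_comm]
    calc h ^ k * x = z ^ k * x * h ^ k := hpow k
      _ = x * h ^ k := by rw [hzk, one_mul]
end

section
/- Let H and K be groups and ρ : H → K a surjective group homomorphism whose kernel is contained in the center Z(H). Let X be a subgroup of H and set P := ρ⁻¹(C_K(ρ(X))). Then for every natural number e such that z^e = 1 for all z ∈ ker ρ ∩ [H,H], one has h^e ∈ C_H(X) for every h ∈ P; in other words, the exponent of P/C_H(X) divides the exponent of ker ρ ∩ [H,H]. (First assertion of Lemma 1.2.1.) -/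
/-- Lemma 1.2.1 (first assertion, exponent of `ker ρ ∩ [H,H]` part): if `ρ : H → K` is a
surjective group homomorphism with central kernel, `X ≤ H` and
`P = ρ⁻¹(C_K(ρ(X)))`, then for every `e` annihilating `ker ρ ∩ [H,H]`,
`h ^ e ∈ C_H(X)` for every `h ∈ P`. -/
theorem stmt1 {H K : Type*} [Group H] [Group K] (ρ : H →* K)
    (hsurj : Function.Surjective ρ) (hker : ρ.ker ≤ Subgroup.center H)
    (X : Subgroup H) :
    ∀ e : ℕ, (∀ z ∈ ρ.ker ⊓ commutator H, z ^ e = 1) →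
      ∀ h ∈ (Subgroup.centralizer ((X.map ρ) : Set K)).comap ρ,
        h ^ e ∈ Subgroup.centralizer (X : Set H) := by
  intro e he h hh
  rw [Subgroup.mem_centralizer_iff]
  intro x hx
  set z := h * x * h⁻¹ * x⁻¹ with hzdef
  have hcomm : ρ h * ρ x = ρ x * ρ h := by
    have := Subgroup.mem_comap.mp hh
    rw [Subgroup.mem_centralizer_iff] at this
    exact (this (ρ x) ⟨x, hx, rfl⟩).symm
  have hzker : z ∈ ρ.ker := by
    rw [MonoidHom.mem_ker, hzdef]
    simp only [map_mul, map_inv]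
    rw [hcomm]
    group
  have hzcomm : z ∈ commutator H := by
    open scoped commutatorElement in
    have : z = ⁅h, x⁆ := by exact hzdef.trans (commutatorElement_def h x).symm
    rw [this, commutator_def]
    exact Subgroup.commutator_mem_commutator (Subgroup.mem_top h) (Subgroup.mem_top x)
  have hze : z ^ e = 1 := he z ⟨hzker, hzcomm⟩
  have hzc : ∀ g : H, g * z = z * g := fun g =>
    (Subgroup.mem_center_iff.mp (hker hzker) g)
  have hhx : h * x = z * x * h := by rw [hzdef]; group
  have key : ∀ n : ℕ, h ^ n * x = z ^ n * x * h ^ n := by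
    intro n
    induction n with
    | zero => simp
    | succ n ih =>
      have hcn : h * z ^ n = z ^ n * h := (Commute.pow_right (hzc h) n)
      calc h ^ (n + 1) * x = h * (h ^ n * x) := by rw [pow_succ']; group
        _ = h * (z ^ n * x * h ^ n) := by rw [ih]
        _ = (h * z ^ n) * x * h ^ n := by group
        _ = z ^ n * (h * x) * h ^ n := by rw [hcn]; group
        _ = z ^ n * (z * x * h) * h ^ n := by rw [hhx]
        _ = (z ^ n * z) * x * h ^ (n + 1) := by rw [pow_succ]; group
        _ = z ^ (n + 1) * x * h ^ (n + 1) := by rw [← pow_succ]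
  have := key e
  rw [hze, one_mul] at this
  exact this.symm
end

section
/- Let H and K be groups and ρ : H → K a surjective group homomorphism whose kernel is contained in the center Z(H). Let X be a finite subgroup of H such that ker ρ ∩ [H,H] is finite and the orders |X| and |ker ρ ∩ [H,H]| are coprime (equivalently, X is a finite π-group and ker ρ ∩ [H,H] is a finite π′-group for some set of primes π). Then ρ(C_H(X)) = C_K(ρ(X)). (Second assertion of Lemma 1.2.1.) -/
/-- Lemma 1.2.1 (second assertion): if `ρ : H → K` is a surjective group homomorphism with
central kernel, `X ≤ H` is finite, `ker ρ ∩ [H,H]` is finite, and their orders are coprime,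
then `ρ(C_H(X)) = C_K(ρ(X))`. -/
theorem stmt2 {H K : Type*} [Group H] [Group K] (ρ : H →* K)
    (hsurj : Function.Surjective ρ) (hker : ρ.ker ≤ Subgroup.center H)
    (X : Subgroup H) [Finite ↥X] [Finite ↥(ρ.ker ⊓ commutator H)]
    (hcop : Nat.Coprime (Nat.card ↥X) (Nat.card ↥(ρ.ker ⊓ commutator H))) :
    (Subgroup.centralizer (X : Set H)).map ρ =
      Subgroup.centralizer ((X.map ρ) : Set K) := by
  apply le_antisymm
  · rintro k hk
    rw [Subgroup.mem_map] at hk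
    obtain ⟨h, hh, rfl⟩ := hk
    rw [Subgroup.mem_centralizer_iff]
    rintro y hy
    obtain ⟨x, hx, rfl⟩ := hy
    have := Subgroup.mem_centralizer_iff.mp hh x hx
    simp only [← map_mul, this]
  · intro k hk
    obtain ⟨h, rfl⟩ := hsurj k
    rw [Subgroup.mem_map]
    refine ⟨h, ?_, rfl⟩
    rw [Subgroup.mem_centralizer_iff]
    intro x hx
    set n := Nat.card ↥X with hn
    -- the commutator c = h x h⁻¹ x⁻¹
    set c : H := h * x * h⁻¹ * x⁻¹ with hc
    have hcker : c ∈ ρ.ker := by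
      have hcomm : ρ x * ρ h = ρ h * ρ x :=
        Subgroup.mem_centralizer_iff.mp hk (ρ x) ⟨x, hx, rfl⟩
      simp only [MonoidHom.mem_ker, hc, map_mul, map_inv]
      rw [← hcomm]
      group
    have hcN : c ∈ ρ.ker ⊓ commutator H := by
      refine ⟨hcker, ?_⟩
      open scoped commutatorElement in
      have : c = ⁅h, x⁆ := by simp [hc, commutatorElement_def]
      rw [this, commutator_def]
      exact Subgroup.commutator_mem_commutator (Subgroup.mem_top h) (Subgroup.mem_top x)
    have hcentral : ∀ g : H, g * c = c * g := Subgroup.mem_center_iff.mp (hker hcker)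
    -- x ^ n = 1
    have hxn : x ^ n = 1 := by
      have : ((⟨x, hx⟩ : X) : H) ^ n = ((1 : X) : H) := by
        rw [← SubmonoidClass.coe_pow]
        congr 1
        exact pow_card_eq_one'
      simpa using this
    -- c ^ n = 1
    have hcn : c ^ n = 1 := by
      have hcx : c * x = h * x * h⁻¹ := by rw [hc]; group
      have hcomm : Commute c x := (hcentral x).symm
      have h1 : (c * x) ^ n = c ^ n * x ^ n := hcomm.mul_pow n
      have h2 : (h * x * h⁻¹) ^ n = h * x ^ n * h⁻¹ := conj_pow
      rw [hcx, h2, hxn] at h1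
      simpa using h1.symm
    have hdvd1 : orderOf c ∣ n := orderOf_dvd_of_pow_eq_one hcn
    have hdvd2 : orderOf c ∣ Nat.card ↥(ρ.ker ⊓ commutator H) := by
      have : orderOf (⟨c, hcN⟩ : (ρ.ker ⊓ commutator H : Subgroup H)) = orderOf c :=
        Subgroup.orderOf_mk c hcN
      rw [← this]
      exact orderOf_dvd_natCard _
    have : orderOf c = 1 :=
      Nat.eq_one_of_dvd_one (hcop ▸ Nat.dvd_gcd hdvd1 hdvd2)
    have hc1 : c = 1 := orderOf_eq_one_iff.mp this
    have h0 : h * x * h⁻¹ * x⁻¹ = 1 := hc1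
    rw [mul_inv_eq_one, mul_inv_eq_iff_eq_mul] at h0
    exact h0.symm
end

section
/- Let N be a positive even integer, let b_1, …, b_N be natural numbers such that b_j > b_1 for all j ≠ 1, let ε : {1,…,N} → {−1, 1} be any function, and let q ≥ 2 be an integer. Then ∏_{j=1}^N (q^{b_j} − ε(j)) ≠ ∏_{j=1}^N (q^{b_j} + ε(j)). (The Lemma in the proof of Proposition 5.2, used to distinguish the degrees of two unipotent characters of a finite classical group.) -/
open Finset

private lemma key5 {ι : Type*} [DecidableEq ι] (D : ℤ) (x e : ι → ℤ) (s : Finset ι)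
    (hx : ∀ i ∈ s, D ∣ x i) :
    (2*D ∣ (∏ i ∈ s, (x i + e i)) - (∏ i ∈ s, (x i - e i)) - (1 - (-1)^s.card) * ∏ i ∈ s, e i)
    ∧ (2*D ∣ (∏ i ∈ s, (x i + e i)) + (∏ i ∈ s, (x i - e i)) - (1 + (-1)^s.card) * ∏ i ∈ s, e i) := by
  classical
  induction s using Finset.induction_on with
  | empty => simp
  | @insert a s ha ih =>
    obtain ⟨k, hk⟩ := (ih fun i hi => hx i (mem_insert_of_mem hi)).1
    obtain ⟨l, hl⟩ := (ih fun i hi => hx i (mem_insert_of_mem hi)).2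
    obtain ⟨d, hd⟩ := hx a (mem_insert_self a s)
    rw [prod_insert ha, prod_insert ha, prod_insert ha, card_insert_of_notMem ha]
    set B := ∏ i ∈ s, (x i + e i) with hB
    set A := ∏ i ∈ s, (x i - e i) with hA
    set E := ∏ i ∈ s, e i with hE
    rcases Nat.even_or_odd s.card with hpar | hpar
    · rw [hpar.neg_one_pow] at hk hl
      rw [(Even.add_one hpar).neg_one_pow]
      constructor
      · exact ⟨D*d*k + e a * l, by linear_combination (x a)*hk + (e a)*hl + (2*D*k)*hd⟩
      · exact ⟨d*E + D*d*l + e a * k, by linear_combination (x a)*hl + (e a)*hk + (2*E + 2*D*l)*hd⟩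
    · rw [hpar.neg_one_pow] at hk hl
      rw [(Odd.add_one hpar).neg_one_pow]
      constructor
      · exact ⟨d*E + D*d*k + e a * l, by linear_combination (x a)*hk + (e a)*hl + (2*E + 2*D*k)*hd⟩
      · exact ⟨D*d*l + e a * k, by linear_combination (x a)*hl + (e a)*hk + (2*D*l)*hd⟩

/-- The Lemma in the proof of Proposition 5.2: for an even number `N ≥ 1` of natural
numbers `b_j` with `b_j > b_1` for `j ≠ 1`, any signs `ε j ∈ {−1, 1}` and any integer
`q ≥ 2`, the products `∏ (q ^ b_j − ε j)` and `∏ (q ^ b_j + ε j)` are different. -/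
theorem stmt5 (N : ℕ) (hNpos : 0 < N) (hNeven : Even N) (b : Fin N → ℕ)
    (hb : ∀ j : Fin N, j ≠ ⟨0, hNpos⟩ → b ⟨0, hNpos⟩ < b j)
    (ε : Fin N → ℤ) (hε : ∀ j, ε j = 1 ∨ ε j = -1)
    (q : ℤ) (hq : 2 ≤ q) :
    (∏ j : Fin N, (q ^ b j - ε j)) ≠ ∏ j : Fin N, (q ^ b j + ε j) := by
  intro hEq
  set j0 : Fin N := ⟨0, hNpos⟩ with hj0
  set s := (univ : Finset (Fin N)).erase j0 with hs
  have hcard : s.card = N - 1 := by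
    rw [hs, card_erase_of_mem (mem_univ _), card_univ, Fintype.card_fin]
  have hodd : Odd s.card := by
    obtain ⟨m, hm⟩ := hNeven
    exact ⟨m - 1, by omega⟩
  have hx : ∀ i ∈ s, q ^ (b j0 + 1) ∣ q ^ (b i) := by
    intro i hi
    exact pow_dvd_pow q (hb i (Finset.ne_of_mem_erase hi))
  obtain ⟨h1, h2⟩ := key5 (q ^ (b j0 + 1)) (fun j => q ^ (b j)) ε s hx
  rw [hodd.neg_one_pow] at h1 h2
  set B := ∏ i ∈ s, (q ^ b i + ε i) with hB
  set A := ∏ i ∈ s, (q ^ b i - ε i) with hA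
  set E := ∏ i ∈ s, ε i with hE
  have h1' : 2 * q ^ (b j0 + 1) ∣ B - A - 2 * E := by
    have : (1 - (-1 : ℤ)) * E = 2 * E := by ring
    rwa [this] at h1
  have h2' : 2 * q ^ (b j0 + 1) ∣ B + A := by
    have : B + A - (1 + (-1 : ℤ)) * E = B + A := by ring
    rwa [this] at h2
  rw [← Finset.mul_prod_erase univ _ (mem_univ j0), ← Finset.mul_prod_erase univ _ (mem_univ j0)]
    at hEq
  obtain ⟨k, hk⟩ := h1'
  obtain ⟨l, hl⟩ := h2'
  have hdvd : 2 * q ^ (b j0 + 1) ∣ 2 * q ^ (b j0) * E := by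
    refine ⟨-(q ^ (b j0) * k + ε j0 * l), ?_⟩
    linear_combination (-(q ^ (b j0))) * hk - (ε j0) * hl - hEq
  have hqne : (q : ℤ) ≠ 0 := by positivity
  obtain ⟨w, hw⟩ := hdvd
  rw [pow_succ] at hw
  have hcanc : q ^ (b j0) * E = q ^ (b j0) * (q * w) := by linarith
  have hqE : q ∣ E := ⟨w, mul_left_cancel₀ (pow_ne_zero (b j0) hqne) hcanc⟩
  have hE1 : E = 1 ∨ E = -1 := by
    refine Finset.prod_induction ε (fun z => z = 1 ∨ z = -1) ?_ (Or.inl rfl) ?_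
    · rintro x y (rfl | rfl) (rfl | rfl) <;> norm_num
    · intro i _; exact hε i
  have : q ∣ (1 : ℤ) := by
    rcases hE1 with h | h
    · rwa [h] at hqE
    · rw [h] at hqE; exact (dvd_neg).mp hqE
  have := Int.le_of_dvd one_pos this
  omega
end

section
/- Let B be a finite set of natural numbers, let a ∈ B and d ≥ 1 with a + d ∉ B, and let B′ = (B ∖ {a}) ∪ {a + d}. Then v(B′) − v(B) = Σ_{c ∈ B, a < c < a+d} (c − a) + d · #{c ∈ B : c > a + d}. In particular v(B′) ≥ v(B), with equality if and only if a is the maximum of B. (The hook-addition computation on β-sets in the proof of Proposition 5.2(a), governing the p-valuation of degrees of unipotent characters.) -/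
/-- The valuation of a β-set: `v(B) = Σ_{b ∈ B} b · #{c ∈ B : b < c}`; if
`B = {b_1 < … < b_m}` this equals `Σ_s (m − s)·b_s`. -/
def vBeta (B : Finset ℕ) : ℕ := ∑ b ∈ B, b * (B.filter fun c => b < c).card

private lemma vBeta_double (S : Finset ℕ) :
    vBeta S = ∑ b ∈ S, ∑ c ∈ S, if b < c then b else 0 := by
  unfold vBeta
  refine Finset.sum_congr rfl fun b _ => ?_
  rw [← Finset.sum_filter, Finset.sum_const, smul_eq_mul, mul_comm]

private lemma vBeta_insert (C : Finset ℕ) (x : ℕ) (hx : x ∉ C) :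
    vBeta (insert x C) =
      vBeta C + ∑ c ∈ C, ((if x < c then x else 0) + (if c < x then c else 0)) := by
  rw [vBeta_double, vBeta_double, Finset.sum_insert hx]
  simp only [Finset.sum_insert hx, if_neg (lt_irrefl x), Finset.sum_add_distrib]
  ring

/-- The hook-addition computation on β-sets from the proof of Proposition 5.2(a):
if `a ∈ B`, `d ≥ 1` and `a + d ∉ B`, and `B′` is obtained from `B` by replacing `a` with
`a + d`, then `v(B′) = v(B) + Σ_{c ∈ B, a < c < a+d} (c − a) + d·#{c ∈ B : c > a + d}`;
in particular `v(B′) ≥ v(B)` with equality iff `a` is the maximum of `B`. -/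
theorem stmt6 (B : Finset ℕ) (a d : ℕ) (ha : a ∈ B) (hd : 1 ≤ d) (had : a + d ∉ B) :
    vBeta (insert (a + d) (B.erase a)) =
        vBeta B + (∑ c ∈ B.filter fun c => a < c ∧ c < a + d, (c - a)) +
          d * (B.filter fun c => a + d < c).card ∧
      vBeta B ≤ vBeta (insert (a + d) (B.erase a)) ∧
      (vBeta (insert (a + d) (B.erase a)) = vBeta B ↔ ∀ c ∈ B, c ≤ a) := by
  classical
  set C := B.erase a with hC
  have haC : a ∉ C := Finset.notMem_erase a B
  have hadC : a + d ∉ C := fun h => had (Finset.mem_of_mem_erase h)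
  have hB : B = insert a C := (Finset.insert_erase ha).symm
  have e1 : vBeta B = vBeta C +
      ∑ c ∈ C, ((if a < c then a else 0) + (if c < a then c else 0)) := by
    conv_lhs => rw [hB]
    exact vBeta_insert C a haC
  have e2 := vBeta_insert C (a + d) hadC
  have e3 : ∑ c ∈ C, ((if a + d < c then a + d else 0) + (if c < a + d then c else 0)) =
      ∑ c ∈ C, (((if a < c then a else 0) + (if c < a then c else 0)) +
        ((if a < c ∧ c < a + d then c - a else 0) + (if a + d < c then d else 0))) := by
    refine Finset.sum_congr rfl fun c hc => ?_
    have h1 : c ≠ a := Finset.ne_of_mem_erase hc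
    have h2 : c ≠ a + d := fun h => had (h ▸ Finset.mem_of_mem_erase hc)
    split_ifs <;> omega
  have hfilt : ∀ (P : ℕ → Prop) [DecidablePred P], ¬ P a →
      C.filter (fun c => P c) = B.filter (fun c => P c) := by
    intro P _ hPa
    ext c
    simp only [hC, Finset.mem_filter, Finset.mem_erase]
    constructor
    · rintro ⟨⟨_, hcB⟩, hPc⟩; exact ⟨hcB, hPc⟩
    · rintro ⟨hcB, hPc⟩; exact ⟨⟨fun h => hPa (h ▸ hPc), hcB⟩, hPc⟩
  have hsum1 : ∑ c ∈ C, (if a < c ∧ c < a + d then c - a else 0) =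
      ∑ c ∈ B.filter (fun c => a < c ∧ c < a + d), (c - a) := by
    rw [← Finset.sum_filter, hfilt (fun c => a < c ∧ c < a + d) (by omega)]
  have hsum2 : ∑ c ∈ C, (if a + d < c then d else 0) =
      d * (B.filter (fun c => a + d < c)).card := by
    rw [← Finset.sum_filter, hfilt (fun c => a + d < c) (by omega), Finset.sum_const,
      smul_eq_mul, mul_comm]
  have main : vBeta (insert (a + d) C) =
      vBeta B + (∑ c ∈ B.filter (fun c => a < c ∧ c < a + d), (c - a)) +
        d * (B.filter (fun c => a + d < c)).card := by
    rw [e2, e3]; simp only [Finset.sum_add_distrib]; rw [hsum1, hsum2, e1]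
    simp only [Finset.sum_add_distrib]
    ring
  refine ⟨main, by rw [main]; omega, ?_⟩
  rw [main]
  constructor
  · intro heq c hcB
    have hz : (∑ c ∈ B.filter (fun c => a < c ∧ c < a + d), (c - a)) = 0 ∧
        d * (B.filter (fun c => a + d < c)).card = 0 := by omega
    have hcard : (B.filter (fun c => a + d < c)).card = 0 := by
      rcases Nat.mul_eq_zero.mp hz.2 with h | h
      · omega
      · exact h
    have hempty2 : B.filter (fun c => a + d < c) = ∅ := Finset.card_eq_zero.mp hcard
    have h2 : ¬ (a + d < c) := by
      intro h
      have : c ∈ B.filter (fun c => a + d < c) := Finset.mem_filter.mpr ⟨hcB, h⟩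
      simp [hempty2] at this
    have h1 : ¬ (a < c ∧ c < a + d) := by
      intro h
      have hm : c ∈ B.filter (fun c => a < c ∧ c < a + d) := Finset.mem_filter.mpr ⟨hcB, h⟩
      have := (Finset.sum_eq_zero_iff.mp hz.1) c hm
      omega
    have h3 : c ≠ a + d := fun h => had (h ▸ hcB)
    omega
  · intro hmax
    have h1 : B.filter (fun c => a < c ∧ c < a + d) = ∅ := by
      refine Finset.filter_eq_empty_iff.mpr fun c hc => ?_
      have := hmax c hc; omega
    have h2 : B.filter (fun c => a + d < c) = ∅ := by
      refine Finset.filter_eq_empty_iff.mpr fun c hc => ?_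
      have := hmax c hc; omega
    rw [h1, h2]
    simp
end

section
/- Let B be a finite nonempty set of natural numbers, d ≥ 1 and t ≥ 1, and let B′ be obtained from B by a sequence of t successive d-hook additions (at each step some element a of the current set is replaced by a + d, where a + d is not in the current set). Then v(B′) ≥ v(B); moreover v(B′) = v(B) if and only if every step replaces the maximum of the current set, in which case B′ = (B ∖ {max B}) ∪ {max B + t·d} and the sequence of intermediate sets is uniquely determined. (Uniqueness of the β-set of minimal valuation in a d-series and of the removal sequence, from the proof of Proposition 5.2(a.1).) -/
lemma W_eq (B : Finset ℕ) :
    ∑ b ∈ B, ∑ c ∈ B, min b c = 2 * vBeta B + ∑ b ∈ B, b := by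
  have h : ∀ b ∈ B, ∑ c ∈ B, min b c =
      (∑ c ∈ B, if c < b then c else 0) + (∑ c ∈ B, if b < c then b else 0)
        + (∑ c ∈ B, if b = c then b else 0) := by
    intro b _
    rw [← Finset.sum_add_distrib, ← Finset.sum_add_distrib]
    refine Finset.sum_congr rfl fun c _ => ?_
    split_ifs <;> omega
  rw [Finset.sum_congr rfl h]
  rw [Finset.sum_add_distrib, Finset.sum_add_distrib]
  have h1 : ∑ b ∈ B, ∑ c ∈ B, (if c < b then c else 0) = vBeta B := by
    rw [Finset.sum_comm]
    refine Finset.sum_congr rfl fun c _ => ?_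
    rw [← Finset.sum_filter, Finset.sum_const, smul_eq_mul, mul_comm]
  have h2 : ∑ b ∈ B, ∑ c ∈ B, (if b < c then b else 0) = vBeta B := by
    refine Finset.sum_congr rfl fun b _ => ?_
    rw [← Finset.sum_filter, Finset.sum_const, smul_eq_mul, mul_comm]
  have h3 : ∑ b ∈ B, ∑ c ∈ B, (if b = c then b else 0) = ∑ b ∈ B, b := by
    refine Finset.sum_congr rfl fun b hb => ?_
    rw [Finset.sum_ite_eq B b (fun _ => b), if_pos hb]
  rw [h1, h2, h3]; ring

lemma W_insert (C : Finset ℕ) (y : ℕ) (hy : y ∉ C) :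
    ∑ b ∈ insert y C, ∑ c ∈ insert y C, min b c
      = (∑ b ∈ C, ∑ c ∈ C, min b c) + 2 * (∑ x ∈ C, min y x) + y := by
  rw [Finset.sum_insert hy, Finset.sum_insert hy]
  have : ∀ b ∈ C, ∑ c ∈ insert y C, min b c = min y b + ∑ c ∈ C, min b c := by
    intro b _; rw [Finset.sum_insert hy, min_comm]
  rw [Finset.sum_congr rfl this, Finset.sum_add_distrib, min_self]
  ring

lemma key (C : Finset ℕ) (y z : ℕ) (hy : y ∉ C) (hz : z ∉ C) :
    vBeta (insert z C) + ∑ x ∈ C, min y x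
      = vBeta (insert y C) + ∑ x ∈ C, min z x := by
  have Hy := W_eq (insert y C)
  have Hz := W_eq (insert z C)
  rw [W_insert C y hy, Finset.sum_insert hy] at Hy
  rw [W_insert C z hz, Finset.sum_insert hz] at Hz
  omega

lemma step_ineq (B : Finset ℕ) (a d : ℕ) (hd : 1 ≤ d) (ha : a ∈ B) (had : a + d ∉ B) :
    vBeta B ≤ vBeta (insert (a + d) (B.erase a)) ∧
      (vBeta (insert (a + d) (B.erase a)) = vBeta B ↔ ∀ c ∈ B, c ≤ a) := by
  set C := B.erase a with hC
  have haC : a ∉ C := Finset.notMem_erase a B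
  have hadC : a + d ∉ C := fun h => had (Finset.mem_of_mem_erase h)
  have hB : insert a C = B := Finset.insert_erase ha
  have hkey := key C a (a + d) haC hadC
  rw [hB] at hkey
  have hle : ∀ x ∈ C, min a x ≤ min (a + d) x := fun x _ => by omega
  have hsum : ∑ x ∈ C, min a x ≤ ∑ x ∈ C, min (a + d) x := Finset.sum_le_sum hle
  constructor
  · omega
  · rw [show (vBeta (insert (a + d) C) = vBeta B) ↔
        (∑ x ∈ C, min a x = ∑ x ∈ C, min (a + d) x) by omega]
    rw [Finset.sum_eq_sum_iff_of_le hle]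
    constructor
    · intro h c hc
      rcases eq_or_ne c a with rfl | hne
      · exact le_rfl
      · have hcC : c ∈ C := Finset.mem_erase.mpr ⟨hne, hc⟩
        have := h c hcC; omega
    · intro h x hx
      have := h x (Finset.mem_of_mem_erase hx); omega

/-- From the proof of Proposition 5.2(a.1): if `B′ = Bs t` is obtained from a nonempty
β-set `B = Bs 0` by `t ≥ 1` successive `d`-hook additions (`d ≥ 1`), then
`v(B′) ≥ v(B)`, with equality iff every step replaces the maximum of the current set;
in that case each intermediate set is uniquely determined:
`Bs i = (B ∖ {max B}) ∪ {max B + i·d}` for all `i ≤ t`. -/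
theorem stmt7 (d t : ℕ) (hd : 1 ≤ d) (ht : 1 ≤ t) (Bs : ℕ → Finset ℕ) (a : ℕ → ℕ)
    (hB0 : (Bs 0).Nonempty)
    (hstep : ∀ i < t, a i ∈ Bs i ∧ a i + d ∉ Bs i ∧
      Bs (i + 1) = insert (a i + d) ((Bs i).erase (a i))) :
    vBeta (Bs 0) ≤ vBeta (Bs t) ∧
      (vBeta (Bs t) = vBeta (Bs 0) ↔ ∀ i < t, ∀ c ∈ Bs i, c ≤ a i) ∧
      ((∀ i < t, ∀ c ∈ Bs i, c ≤ a i) →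
        ∀ i ≤ t, Bs i =
          insert ((Bs 0).max' hB0 + i * d) ((Bs 0).erase ((Bs 0).max' hB0))) := by
  have hstep' : ∀ i < t, vBeta (Bs i) ≤ vBeta (Bs (i + 1)) ∧
      (vBeta (Bs (i + 1)) = vBeta (Bs i) ↔ ∀ c ∈ Bs i, c ≤ a i) := by
    intro i hi
    obtain ⟨h1, h2, h3⟩ := hstep i hi
    rw [h3]
    exact step_ineq (Bs i) (a i) d hd h1 h2
  have hchain : ∀ j ≤ t, ∀ i ≤ j, vBeta (Bs i) ≤ vBeta (Bs j) := by
    intro j hj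
    induction j with
    | zero => intro i hi; interval_cases i; exact le_rfl
    | succ n ih =>
      intro i hi
      have hnt : n < t := hj
      rcases Nat.eq_or_lt_of_le hi with rfl | hlt
      · exact le_rfl
      · exact le_trans (ih (le_of_lt hnt) i (Nat.lt_succ_iff.mp hlt))
          (hstep' n hnt).1
  refine ⟨hchain t le_rfl 0 (Nat.zero_le _), ?_, ?_⟩
  · constructor
    · intro heq i hi
      have h1 : vBeta (Bs 0) ≤ vBeta (Bs i) := hchain i (le_of_lt hi) 0 (Nat.zero_le _)
      have h2 : vBeta (Bs i) ≤ vBeta (Bs (i + 1)) := (hstep' i hi).1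
      have h3 : vBeta (Bs (i + 1)) ≤ vBeta (Bs t) := hchain t le_rfl (i + 1) hi
      exact (hstep' i hi).2.mp (by omega)
    · intro hall
      have : ∀ j ≤ t, vBeta (Bs j) = vBeta (Bs 0) := by
        intro j hj
        induction j with
        | zero => rfl
        | succ n ih =>
          have hnt : n < t := hj
          rw [(hstep' n hnt).2.mpr (hall n hnt), ih (le_of_lt hnt)]
      exact this t le_rfl
  · intro hall i hit
    set M := (Bs 0).max' hB0 with hM
    have hMmem : M ∈ Bs 0 := Finset.max'_mem _ hB0
    have hMmax : ∀ c ∈ Bs 0, c ≤ M := fun c hc => Finset.le_max' _ c hc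
    induction i with
    | zero => simp [Finset.insert_erase hMmem]
    | succ n ih =>
      have hnt : n < t := hit
      have ihn := ih (le_of_lt hnt)
      obtain ⟨h1, h2, h3⟩ := hstep n hnt
      have hmemM : M + n * d ∈ Bs n := by rw [ihn]; exact Finset.mem_insert_self _ _
      have hle : M + n * d ≤ a n := hall n hnt _ hmemM
      have han : a n = M + n * d := by
        have := h1
        rw [ihn] at this
        rcases Finset.mem_insert.mp this with h | h
        · exact h
        · have h4 : a n ≤ M := hMmax _ (Finset.mem_of_mem_erase h)
          have h5 : a n ≠ M := (Finset.mem_erase.mp h).1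
          omega
      have hnotin : M + n * d ∉ (Bs 0).erase M := by
        intro h
        have h4 : M + n * d ≤ M := hMmax _ (Finset.mem_of_mem_erase h)
        have h5 : M + n * d ≠ M := (Finset.mem_erase.mp h).1
        omega
      rw [h3, han, ihn, Finset.erase_insert hnotin]
      congr 1
      ring
end

section
/- Let M and N be groups acting on a set S such that the two actions commute (m·(n·s) = n·(m·s) for all m ∈ M, n ∈ N, s ∈ S), and fix λ ∈ S. Then X := {x ∈ M : x·λ ∈ N·λ} is a subgroup of M containing the stabilizer Stab_M(λ), N₀ := {n ∈ N : n·λ ∈ M·λ} is a subgroup of N containing Stab_N(λ), and there is a bijection from the left coset space X/Stab_M(λ) onto N₀/Stab_N(λ) sending the coset of x ∈ X to the coset of any n ∈ N with x·λ = n·λ. In particular, if M and N are finite, then |X| · |Stab_N(λ)| = |Stab_M(λ)| · |N₀|. (The counting argument in the proof of Proposition 2.4.2(a), applied there to the commuting actions of M^F/L^F and N_{G^F}(L)/L^F on Irr(L^F).) -/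
open MulAction

/-- The counting argument in the proof of Proposition 2.4.2(a): if `M` and `N` act on a
set `S` with commuting actions and `l ∈ S`, then `X = {x ∈ M : x·l ∈ N·l}` is a subgroup
of `M` containing `Stab_M(l)`, `N₀ = {n ∈ N : n·l ∈ M·l}` is a subgroup of `N` containing
`Stab_N(l)`, and there is a bijection `X/Stab_M(l) ≃ N₀/Stab_N(l)` sending the coset of
`x` to the coset of any `n` with `x·l = n·l`; in particular, when `M` and `N` are finite,
`|X| · |Stab_N(l)| = |Stab_M(l)| · |N₀|`. -/
theorem stmt9 {M N S : Type*} [Group M] [Group N] [MulAction M S] [MulAction N S]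
    (hcomm : ∀ (m : M) (n : N) (s : S), m • n • s = n • m • s) (l : S) :
    ∃ (X : Subgroup M) (N₀ : Subgroup N),
      (X : Set M) = {x : M | x • l ∈ MulAction.orbit N l} ∧
      (N₀ : Set N) = {n : N | n • l ∈ MulAction.orbit M l} ∧
      MulAction.stabilizer M l ≤ X ∧ MulAction.stabilizer N l ≤ N₀ ∧
      ∃ (f : (↥X ⧸ (MulAction.stabilizer M l).subgroupOf X) ≃
          (↥N₀ ⧸ (MulAction.stabilizer N l).subgroupOf N₀)),
        (∀ (x : ↥X) (n : ↥N₀), (x : M) • l = (n : N) • l →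
          f (QuotientGroup.mk x) = QuotientGroup.mk n) ∧
        (Finite M → Finite N →
          Nat.card ↥X * Nat.card ↥(MulAction.stabilizer N l) =
            Nat.card ↥(MulAction.stabilizer M l) * Nat.card ↥N₀) := by
  classical
  let X : Subgroup M :=
    { carrier := {x : M | x • l ∈ MulAction.orbit N l}
      one_mem' := ⟨1, by simp⟩
      mul_mem' := by
        rintro a b ⟨n, hn⟩ ⟨n', hn'⟩
        dsimp only at hn hn'
        refine ⟨n' * n, ?_⟩
        show (n' * n) • l = (a * b) • l
        rw [mul_smul, mul_smul, hn, ← hcomm, hn']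
      inv_mem' := by
        rintro a ⟨n, hn⟩
        dsimp only at hn
        refine ⟨n⁻¹, ?_⟩
        show n⁻¹ • l = a⁻¹ • l
        rw [inv_smul_eq_iff, ← hcomm, hn, inv_smul_smul] }
  let N₀ : Subgroup N :=
    { carrier := {n : N | n • l ∈ MulAction.orbit M l}
      one_mem' := ⟨1, by simp⟩
      mul_mem' := by
        rintro a b ⟨m, hm⟩ ⟨m', hm'⟩
        dsimp only at hm hm'
        refine ⟨m' * m, ?_⟩
        show (m' * m) • l = (a * b) • l
        rw [mul_smul, mul_smul, hm, hcomm, hm']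
      inv_mem' := by
        rintro a ⟨m, hm⟩
        dsimp only at hm
        refine ⟨m⁻¹, ?_⟩
        show m⁻¹ • l = a⁻¹ • l
        rw [inv_smul_eq_iff, hcomm, hm, inv_smul_smul] }
  have hleX : MulAction.stabilizer M l ≤ X := fun m hm => ⟨1, by simpa using hm.symm⟩
  have hleN : MulAction.stabilizer N l ≤ N₀ := fun n hn => ⟨1, by simpa using hn.symm⟩
  have hstX : (MulAction.stabilizer M l).subgroupOf X = MulAction.stabilizer X l := by
    ext x; rfl
  have hstN : (MulAction.stabilizer N l).subgroupOf N₀ = MulAction.stabilizer N₀ l := by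
    ext n; rfl
  have horb : (MulAction.orbit X l : Set S) = MulAction.orbit N₀ l := by
    ext s
    constructor
    · rintro ⟨⟨x, hx⟩, rfl⟩
      have hx' : ∃ n : N, n • l = x • l := hx
      obtain ⟨n, hn⟩ := hx'
      exact ⟨⟨n, ⟨x, hn.symm⟩⟩, hn⟩
    · rintro ⟨⟨n, hn⟩, rfl⟩
      have hn' : ∃ m : M, m • l = n • l := hn
      obtain ⟨m, hm⟩ := hn'
      exact ⟨⟨m, ⟨n, hm.symm⟩⟩, hm⟩
  refine ⟨X, N₀, rfl, rfl, hleX, hleN, ?_⟩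
  rw [hstX, hstN]
  refine ⟨((orbitEquivQuotientStabilizer X l).symm.trans
      (Equiv.setCongr horb)).trans (orbitEquivQuotientStabilizer N₀ l), ?_, ?_⟩
  · intro x n h
    have h1 : (Equiv.setCongr horb) ((orbitEquivQuotientStabilizer X l).symm
        (QuotientGroup.mk x)) = (orbitEquivQuotientStabilizer N₀ l).symm
        (QuotientGroup.mk n) := by
      apply Subtype.ext
      simp only [Equiv.setCongr_apply]
      show ((orbitEquivQuotientStabilizer (↥X) l).symm _ : S) = _
      rw [orbitEquivQuotientStabilizer_symm_apply, orbitEquivQuotientStabilizer_symm_apply]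
      exact h
    simp [Equiv.trans_apply, h1]
  · intro _ _
    have e1 : (MulAction.stabilizer M l).subgroupOf X ≃* MulAction.stabilizer M l :=
      Subgroup.subgroupOfEquivOfLe hleX
    have e2 : (MulAction.stabilizer N l).subgroupOf N₀ ≃* MulAction.stabilizer N l :=
      Subgroup.subgroupOfEquivOfLe hleN
    have hq : Nat.card (X ⧸ MulAction.stabilizer X l)
        = Nat.card (N₀ ⧸ MulAction.stabilizer N₀ l) :=
      Nat.card_congr (((orbitEquivQuotientStabilizer X l).symm.trans
        (Equiv.setCongr horb)).trans (orbitEquivQuotientStabilizer N₀ l))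
    have hcX := Subgroup.card_eq_card_quotient_mul_card_subgroup (MulAction.stabilizer X l)
    have hcN := Subgroup.card_eq_card_quotient_mul_card_subgroup (MulAction.stabilizer N₀ l)
    have hsX : Nat.card (MulAction.stabilizer X l) = Nat.card (MulAction.stabilizer M l) := by
      rw [← hstX]; exact Nat.card_congr e1.toEquiv
    have hsN : Nat.card (MulAction.stabilizer N₀ l) = Nat.card (MulAction.stabilizer N l) := by
      rw [← hstN]; exact Nat.card_congr e2.toEquiv
    rw [hcX, hcN, hq, hsX, hsN]
    ring
end
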